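/- Assume 0 < η ≤ c_∞ and let (f^t, g^t, λ^t) be the iterates of PAM. Then for every t ≥ 0 and every λ ∈ Δ^N, ⟨λ − λ^t, ∇_λ F(f^{t+1}, g^t, λ^t)⟩ ≤ 3 c_∞² ‖λ^{t+1} − λ^t‖_2 / η + c_∞ ‖c^t − b‖_1. -/

import Mathlib

open scoped BigOperators

noncomputable section

namespace EOT

/-- Square matrices as functions. -/
abbrev Mat (n : ℕ) := Fin n → Fin n → ℝ

/-- Frobenius inner product ⟨A, B⟩ = Σ_{i,j} A_{ij} B_{ij}. -/
def frob {n : ℕ} (A B : Mat n) : ℝ := ∑ i, ∑ j, A i j * B i j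

/-- Row-sum vector r(A) = A 𝟙. -/
def rowSum {n : ℕ} (A : Mat n) : Fin n → ℝ := fun i => ∑ j, A i j

/-- Column-sum vector c(A) = Aᵀ 𝟙. -/
def colSum {n : ℕ} (A : Mat n) : Fin n → ℝ := fun j => ∑ i, A i j

/-- Entrywise ℓ₁ norm of a matrix. -/
def mnorm1 {n : ℕ} (A : Mat n) : ℝ := ∑ i, ∑ j, |A i j|

/-- ℓ₁ norm of a vector. -/
def vnorm1 {m : ℕ} (v : Fin m → ℝ) : ℝ := ∑ i, |v i|

/-- Euclidean (ℓ₂) norm of a vector. -/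
def vnorm2 {m : ℕ} (v : Fin m → ℝ) : ℝ := Real.sqrt (∑ i, v i ^ 2)

/-- c_∞ := max_{k,i,j} |C^k_{ij}|. -/
def cinf {n N : ℕ} (C : Fin N → Mat n) : ℝ := ⨆ k, ⨆ i, ⨆ j, |C k i j|

/-- ι := min_j log b_j. -/
def iotaMin {n : ℕ} (b : Fin n → ℝ) : ℝ := ⨅ j, Real.log (b j)

/-- ζ^k(f,g,λ)_{ij} = exp((f_i + g_j − λ_k C^k_{ij})/η). -/
def zeta {n N : ℕ} (η : ℝ) (C : Fin N → Mat n) (f g : Fin n → ℝ)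
    (lam : Fin N → ℝ) (k : Fin N) : Mat n :=
  fun i j => Real.exp ((f i + g j - lam k * C k i j) / η)

/-- π^k(f,g,λ) = ζ^k(f,g,λ) / Σ_{k'} ‖ζ^{k'}(f,g,λ)‖₁. -/
def piMat {n N : ℕ} (η : ℝ) (C : Fin N → Mat n) (f g : Fin n → ℝ)
    (lam : Fin N → ℝ) (k : Fin N) : Mat n :=
  fun i j => zeta η C f g lam k i j / ∑ k', mnorm1 (zeta η C f g lam k')

/-- The dual objective F(f,g,λ) = ⟨f,a⟩ + ⟨g,b⟩ − η log(Σ_k ‖ζ^k‖₁) − η. -/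
def Fdual {n N : ℕ} (η : ℝ) (C : Fin N → Mat n) (a b : Fin n → ℝ)
    (f g : Fin n → ℝ) (lam : Fin N → ℝ) : ℝ :=
  (∑ i, f i * a i) + (∑ j, g j * b j)
    - η * Real.log (∑ k, mnorm1 (zeta η C f g lam k)) - η

/-- Gradient of F with respect to λ: (∇_λ F)_k = ⟨π^k(f,g,λ), C^k⟩. -/
def gradLam {n N : ℕ} (η : ℝ) (C : Fin N → Mat n) (f g : Fin n → ℝ)
    (lam : Fin N → ℝ) : Fin N → ℝ :=
  fun k => frob (piMat η C f g lam k) (C k)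

/-- `p` is the Euclidean projection of `x` onto the probability simplex. -/
def IsProjSimplex {m : ℕ} (p x : Fin m → ℝ) : Prop :=
  p ∈ stdSimplex ℝ (Fin m) ∧
    ∀ q ∈ stdSimplex ℝ (Fin m),
      vnorm2 (fun k => p k - x k) ≤ vnorm2 (fun k => q k - x k)

/-- Kullback–Leibler divergence KL(v‖w) = Σ_j v_j log(v_j / w_j). -/
def klVec {m : ℕ} (v w : Fin m → ℝ) : ℝ := ∑ j, v j * Real.log (v j / w j)

/-- The Hamiltonian E(f,g,λ¹,λ²) = F(f,g,λ¹) − (1/(2τ))‖λ¹ − λ²‖₂². -/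
def ham {n N : ℕ} (η : ℝ) (C : Fin N → Mat n) (a b : Fin n → ℝ) (τ : ℝ)
    (f g : Fin n → ℝ) (l1 l2 : Fin N → ℝ) : ℝ :=
  Fdual η C a b f g l1 - 1 / (2 * τ) * vnorm2 (fun k => l1 k - l2 k) ^ 2

/-- The rounding procedure Round(A, a, b). -/
def roundMat {n : ℕ} (A : Mat n) (a b : Fin n → ℝ) : Mat n :=
  let x : Fin n → ℝ := fun i => min (a i / rowSum A i) 1
  let A' : Mat n := fun i j => x i * A i j
  let y : Fin n → ℝ := fun j => min (b j / colSum A' j) 1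
  let A'' : Mat n := fun i j => A' i j * y j
  let erra : Fin n → ℝ := fun i => a i - rowSum A'' i
  let errb : Fin n → ℝ := fun j => b j - colSum A'' j
  fun i j => A'' i j + if vnorm1 erra = 0 then 0 else erra i * errb j / vnorm1 erra

/-- The coupling decomposition set Π_{a,b}^N. -/
def coupling {n N : ℕ} (a b : Fin n → ℝ) : Set (Fin N → Mat n) :=
  {P | (∀ k i j, 0 ≤ P k i j) ∧ rowSum (∑ k, P k) = a ∧ colSum (∑ k, P k) = b}

/-- ℓ(π, λ) = Σ_k λ_k ⟨π^k, C^k⟩. -/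
def ell {n N : ℕ} (C : Fin N → Mat n) (P : Fin N → Mat n) (lam : Fin N → ℝ) : ℝ :=
  ∑ k, lam k * frob (P k) (C k)

/-- (P, λ) is an ε-optimal solution of the EOT problem (duality-gap ≤ ε). -/
def epsOptimal {n N : ℕ} (C : Fin N → Mat n) (a b : Fin n → ℝ)
    (P : Fin N → Mat n) (lam : Fin N → ℝ) (ε : ℝ) : Prop :=
  P ∈ coupling (N := N) a b ∧ lam ∈ stdSimplex ℝ (Fin N) ∧
    ∀ μ ∈ stdSimplex ℝ (Fin N), ∀ Q ∈ coupling (N := N) a b,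
      ell C P μ - ell C Q lam ≤ ε

/-- The defining properties of the Margins procedure output (a^k, b^k). -/
def MarginsProp {n N : ℕ} (P : Fin N → Mat n) (b : Fin n → ℝ)
    (ak bk : Fin N → Fin n → ℝ) : Prop :=
  (∀ k, ak k = rowSum (P k)) ∧
  (∀ k j, 0 ≤ bk k j) ∧
  (∀ j, ∑ k, bk k j = b j) ∧
  (∀ k, ∑ j, bk k j = ∑ i, ak k i) ∧
  (∀ j k k', 0 ≤ (bk k j - colSum (P k) j) * (bk k' j - colSum (P k') j))


lemma vnorm2_nonneg {m : ℕ} (v : Fin m → ℝ) : 0 ≤ vnorm2 v := Real.sqrt_nonneg _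

lemma vnorm2_sq {m : ℕ} (v : Fin m → ℝ) : vnorm2 v ^ 2 = ∑ i, v i ^ 2 :=
  Real.sq_sqrt (Finset.sum_nonneg fun i _ => sq_nonneg _)

lemma cauchy_vn {m : ℕ} (u v : Fin m → ℝ) : ∑ k, u k * v k ≤ vnorm2 u * vnorm2 v :=
  Real.sum_mul_le_sqrt_mul_sqrt _ u v

lemma abs_C_le_cinf {n N : ℕ} (C : Fin N → Mat n) (k : Fin N) (i j : Fin n) :
    |C k i j| ≤ cinf C := by
  have h3 : |C k i j| ≤ ⨆ j', |C k i j'| :=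
    le_ciSup (f := fun j' => |C k i j'|) (Set.Finite.bddAbove (Set.finite_range _)) j
  have h2 : (⨆ j', |C k i j'|) ≤ ⨆ i', ⨆ j', |C k i' j'| :=
    le_ciSup (f := fun i' => ⨆ j', |C k i' j'|) (Set.Finite.bddAbove (Set.finite_range _)) i
  have h1 : (⨆ i', ⨆ j', |C k i' j'|) ≤ ⨆ k', ⨆ i', ⨆ j', |C k' i' j'| :=
    le_ciSup (f := fun k' => ⨆ i', ⨆ j', |C k' i' j'|) (Set.Finite.bddAbove (Set.finite_range _)) k
  exact h3.trans (h2.trans h1)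

lemma proj_vi {m : ℕ} {p x q : Fin m → ℝ} (hp : IsProjSimplex p x)
    (hq : q ∈ stdSimplex ℝ (Fin m)) :
    ∑ k, (q k - p k) * (x k - p k) ≤ 0 := by
  obtain ⟨hpmem, hmin⟩ := hp
  set A := ∑ k, (q k - p k) * (x k - p k) with hA
  set B := ∑ k, (q k - p k) ^ 2 with hB
  have hBnn : 0 ≤ B := Finset.sum_nonneg fun _ _ => sq_nonneg _
  have key : ∀ θ : ℝ, 0 < θ → θ ≤ 1 → 2 * A ≤ θ * B := by
    intro θ hθ hθ1
    have hmem : (fun k => p k + θ * (q k - p k)) ∈ stdSimplex ℝ (Fin m) := by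
      constructor
      · intro k
        have h1 : p k + θ * (q k - p k) = (1 - θ) * p k + θ * q k := by ring
        have h2 := hpmem.1 k
        have h3 := hq.1 k
        show 0 ≤ p k + θ * (q k - p k)
        rw [h1]; nlinarith
      · show ∑ k, (p k + θ * (q k - p k)) = 1
        have h4 : ∑ k, (p k + θ * (q k - p k))
            = (∑ k, p k) + θ * ((∑ k, q k) - ∑ k, p k) := by
          rw [Finset.sum_add_distrib, ← Finset.mul_sum, Finset.sum_sub_distrib]
        rw [h4, hpmem.2, hq.2]; ring
    have hle := hmin _ hmem
    have h1 : ∑ k, (p k - x k) ^ 2 ≤ ∑ k, ((p k + θ * (q k - p k)) - x k) ^ 2 := by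
      have := pow_le_pow_left₀ (vnorm2_nonneg _) hle 2
      rwa [vnorm2_sq, vnorm2_sq] at this
    have hexp : ∑ k, ((p k + θ * (q k - p k)) - x k) ^ 2
        = (∑ k, (p k - x k) ^ 2) - 2 * θ * A + θ ^ 2 * B := by
      rw [hA, hB, Finset.mul_sum, Finset.mul_sum, ← Finset.sum_sub_distrib,
        ← Finset.sum_add_distrib]
      exact Finset.sum_congr rfl fun k _ => by ring
    rw [hexp] at h1
    have h2 : 2 * θ * A ≤ θ ^ 2 * B := by linarith
    have h6 := mul_le_mul_of_nonneg_left h2 (le_of_lt (inv_pos.2 hθ))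
    calc 2 * A = θ⁻¹ * (2 * θ * A) := by field_simp
      _ ≤ θ⁻¹ * (θ ^ 2 * B) := h6
      _ = θ * B := by field_simp
  by_contra hcon
  push_neg at hcon
  rcases eq_or_lt_of_le hBnn with hB0 | hBpos
  · have := key 1 one_pos le_rfl
    rw [← hB0] at this; linarith
  · have hθpos : 0 < min 1 (A / B) := lt_min one_pos (div_pos hcon hBpos)
    have := key _ hθpos (min_le_left _ _)
    have h5 : min 1 (A / B) * B ≤ (A / B) * B :=
      mul_le_mul_of_nonneg_right (min_le_right _ _) hBnn
    rw [div_mul_cancel₀ _ (ne_of_gt hBpos)] at h5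
    linarith

lemma simplex_le_one {m : ℕ} {q : Fin m → ℝ} (hq : q ∈ stdSimplex ℝ (Fin m))
    (k : Fin m) : q k ≤ 1 := by
  calc q k ≤ ∑ k', q k' :=
        Finset.single_le_sum (fun k' _ => hq.1 k') (Finset.mem_univ k)
    _ = 1 := hq.2

/-- bound on ⟨λ − λ^t, ∇_λ F(f^{t+1}, g^t, λ^t)⟩ along PAM. -/
theorem pam_lambda_inner_bound
    {n N : ℕ} (hn : 0 < n) (hN : 0 < N)
    (C : Fin N → Mat n) (a b : Fin n → ℝ)
    (ha : a ∈ stdSimplex ℝ (Fin n)) (hb : b ∈ stdSimplex ℝ (Fin n))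
    (ha' : ∀ i, 0 < a i) (hb' : ∀ j, 0 < b j)
    (η : ℝ) (hη : 0 < η) (hc : 0 < cinf C) (hηc : η ≤ cinf C)
    (τ : ℝ) (hτ : τ = η / cinf C ^ 2)
    (f g : ℕ → Fin n → ℝ) (lam : ℕ → Fin N → ℝ)
    (hf0 : f 0 = fun _ => 1) (hg0 : g 0 = fun _ => 1)
    (hlam0 : lam 0 = fun _ => (N : ℝ)⁻¹)
    (hfstep : ∀ t, f (t + 1) = fun i =>
      f t i + η * Real.log (a i / rowSum (∑ k, zeta η C (f t) (g t) (lam t) k) i))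
    (hgstep : ∀ t, g (t + 1) = fun j =>
      g t j + η * Real.log (b j / colSum (∑ k, zeta η C (f (t + 1)) (g t) (lam t) k) j))
    (hlamstep : ∀ t, IsProjSimplex (lam (t + 1))
      (fun k => lam t k + τ * gradLam η C (f (t + 1)) (g (t + 1)) (lam t) k))
    (ct : ℕ → Fin n → ℝ)
    (hct : ∀ t, ct t = colSum (∑ k, piMat η C (f (t + 1)) (g t) (lam t) k)) :
    ∀ t : ℕ, ∀ lamv ∈ stdSimplex ℝ (Fin N),
      (∑ k, (lamv k - lam t k) * gradLam η C (f (t + 1)) (g t) (lam t) k)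
        ≤ 3 * cinf C ^ 2 * vnorm2 (fun k => lam (t + 1) k - lam t k) / η
          + cinf C * vnorm1 (fun j => ct t j - b j) := by
  intro t lamv hlamv
  have hNne : Nonempty (Fin N) := ⟨⟨0, hN⟩⟩
  have hnne : Nonempty (Fin n) := ⟨⟨0, hn⟩⟩
  have hc0 : (0:ℝ) ≤ cinf C := hc.le
  have hCle : ∀ k i j, |C k i j| ≤ cinf C := fun k i j => abs_C_le_cinf C k i j
  have hlamMem : ∀ u, lam u ∈ stdSimplex ℝ (Fin N) := by
    intro u
    cases u with
    | zero =>
        rw [hlam0]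
        constructor
        · intro k; positivity
        · have hN0 : (N:ℝ) ≠ 0 := Nat.cast_ne_zero.2 hN.ne'
          simp [Finset.sum_const, Finset.card_univ]
          field_simp
    | succ u => exact (hlamstep u).1
  -- abbreviations
  set Z : Fin N → Mat n := zeta η C (f (t+1)) (g t) (lam t) with hZdef
  set Z' : Fin N → Mat n := zeta η C (f (t+1)) (g (t+1)) (lam t) with hZ'def
  have hZpos : ∀ k i j, 0 < Z k i j := fun k i j => Real.exp_pos _
  set S : ℝ := ∑ k, ∑ i, ∑ j, Z k i j with hSdef
  set s : Fin n → ℝ := fun j => ∑ k, ∑ i, Z k i j with hsdef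
  have hSpos : 0 < S := by
    refine Finset.sum_pos (fun k _ => ?_) Finset.univ_nonempty
    exact Finset.sum_pos (fun i _ => Finset.sum_pos (fun j _ => hZpos k i j)
      Finset.univ_nonempty) Finset.univ_nonempty
  have hspos : ∀ j, 0 < s j := by
    intro j
    refine Finset.sum_pos (fun k _ => ?_) Finset.univ_nonempty
    exact Finset.sum_pos (fun i _ => hZpos k i j) Finset.univ_nonempty
  have hbs : ∀ j, 0 < b j / s j := fun j => div_pos (hb' j) (hspos j)
  have hmn : ∀ k, mnorm1 (Z k) = ∑ i, ∑ j, Z k i j := by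
    intro k
    refine Finset.sum_congr rfl fun i _ => Finset.sum_congr rfl fun j _ => ?_
    exact abs_of_pos (hZpos k i j)
  have hSsum : ∑ k', mnorm1 (Z k') = S := by
    rw [hSdef]; exact Finset.sum_congr rfl fun k _ => hmn k
  have hcol : ∀ j, colSum (∑ k, Z k) j = s j := by
    intro j
    simp only [colSum, Finset.sum_apply, hsdef]
    exact Finset.sum_comm
  have hG1 : ∀ j, g (t+1) j = g t j + η * Real.log (b j / s j) := by
    intro j
    have h := congrFun (hgstep t) j
    rw [← hZdef] at h
    rw [h, hcol j]
  have hZ'eq : ∀ k i j, Z' k i j = Z k i j * (b j / s j) := by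
    intro k i j
    rw [hZ'def, hZdef]
    show Real.exp ((f (t+1) i + g (t+1) j - lam t k * C k i j) / η)
      = Real.exp ((f (t+1) i + g t j - lam t k * C k i j) / η) * (b j / s j)
    rw [hG1 j]
    rw [show (f (t+1) i + (g t j + η * Real.log (b j / s j)) - lam t k * C k i j) / η
        = (f (t+1) i + g t j - lam t k * C k i j) / η + Real.log (b j / s j) by
      field_simp; ring]
    rw [Real.exp_add, Real.exp_log (hbs j)]
  have hswap : ∀ (h : Fin N → Fin n → Fin n → ℝ),
      ∑ k, ∑ i, ∑ j, h k i j = ∑ j, ∑ k, ∑ i, h k i j := by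
    intro h
    rw [show (∑ k, ∑ i, ∑ j, h k i j) = ∑ k, ∑ j, ∑ i, h k i j from
      Finset.sum_congr rfl fun k _ => Finset.sum_comm]
    exact Finset.sum_comm
  have hw1 : ∑ k, ∑ i, ∑ j, Z k i j * (b j / s j) = 1 := by
    rw [hswap]
    calc ∑ j, ∑ k, ∑ i, Z k i j * (b j / s j)
        = ∑ j, (∑ k, ∑ i, Z k i j) * (b j / s j) := by
          refine Finset.sum_congr rfl fun j _ => ?_
          rw [Finset.sum_mul]
          exact Finset.sum_congr rfl fun k _ => (Finset.sum_mul _ _ _).symm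
      _ = ∑ j, b j := by
          refine Finset.sum_congr rfl fun j _ => ?_
          have h7 : (∑ k, ∑ i, Z k i j) = s j := rfl
          rw [h7, mul_div_assoc' (s j) (b j) (s j), mul_comm (s j) (b j),
            mul_div_assoc (b j) (s j) (s j), div_self (ne_of_gt (hspos j)), mul_one]
      _ = 1 := hb.2
  have hS'1 : ∑ k', mnorm1 (Z' k') = 1 := by
    rw [show (∑ k', mnorm1 (Z' k')) = ∑ k, ∑ i, ∑ j, Z k i j * (b j / s j) from
      Finset.sum_congr rfl fun k _ => Finset.sum_congr rfl fun i _ =>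
        Finset.sum_congr rfl fun j _ => by
          rw [abs_of_pos (by rw [hZ'def]; exact Real.exp_pos _ : 0 < Z' k i j), hZ'eq]]
    exact hw1
  have hpi : ∀ k i j, piMat η C (f (t+1)) (g t) (lam t) k i j = Z k i j / S := by
    intro k i j
    simp only [piMat, ← hZdef, hSsum]
  have hpi' : ∀ k i j, piMat η C (f (t+1)) (g (t+1)) (lam t) k i j
      = Z k i j * (b j / s j) := by
    intro k i j
    simp only [piMat, ← hZ'def, hS'1, div_one]
    exact hZ'eq k i j
  have hctj : ∀ j, ct t j = s j / S := by
    intro j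
    rw [hct t]
    simp only [colSum, Finset.sum_apply]
    calc ∑ i, ∑ k, piMat η C (f (t+1)) (g t) (lam t) k i j
        = ∑ i, ∑ k, Z k i j / S := by
          exact Finset.sum_congr rfl fun i _ => Finset.sum_congr rfl fun k _ => hpi k i j
      _ = (∑ i, ∑ k, Z k i j) / S := by
          rw [Finset.sum_div]
          exact Finset.sum_congr rfl fun i _ => (Finset.sum_div _ _ _).symm
      _ = s j / S := by rw [show (∑ i, ∑ k, Z k i j) = s j from Finset.sum_comm]
  have hgrad : ∀ k, gradLam η C (f (t+1)) (g t) (lam t) k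
      = ∑ i, ∑ j, Z k i j / S * C k i j := by
    intro k
    simp only [gradLam, frob]
    exact Finset.sum_congr rfl fun i _ => Finset.sum_congr rfl fun j _ => by
      rw [hpi k i j]
  have hgrad' : ∀ k, gradLam η C (f (t+1)) (g (t+1)) (lam t) k
      = ∑ i, ∑ j, Z k i j * (b j / s j) * C k i j := by
    intro k
    simp only [gradLam, frob]
    exact Finset.sum_congr rfl fun i _ => Finset.sum_congr rfl fun j _ => by
      rw [hpi' k i j]
  set D := vnorm2 (fun k => lam (t+1) k - lam t k) with hDdef
  have hDnn : 0 ≤ D := vnorm2_nonneg _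
  -- Part A : bound on the grad' inner product
  have habsgrad' : ∀ k, |gradLam η C (f (t+1)) (g (t+1)) (lam t) k|
      ≤ cinf C * (∑ i, ∑ j, Z k i j * (b j / s j)) := by
    intro k
    rw [hgrad' k]
    calc |∑ i, ∑ j, Z k i j * (b j / s j) * C k i j|
        ≤ ∑ i, ∑ j, |Z k i j * (b j / s j) * C k i j| :=
          (Finset.abs_sum_le_sum_abs _ _).trans
            (Finset.sum_le_sum fun i _ => Finset.abs_sum_le_sum_abs _ _)
      _ ≤ ∑ i, ∑ j, Z k i j * (b j / s j) * cinf C := by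
          refine Finset.sum_le_sum fun i _ => Finset.sum_le_sum fun j _ => ?_
          rw [abs_mul, abs_of_pos (mul_pos (hZpos k i j) (hbs j))]
          exact mul_le_mul_of_nonneg_left (hCle k i j)
            (mul_pos (hZpos k i j) (hbs j)).le
      _ = cinf C * (∑ i, ∑ j, Z k i j * (b j / s j)) := by
          rw [Finset.mul_sum]
          refine Finset.sum_congr rfl fun i _ => ?_
          rw [Finset.mul_sum]
          exact Finset.sum_congr rfl fun j _ => by ring
  have hvn2grad' : vnorm2 (gradLam η C (f (t+1)) (g (t+1)) (lam t)) ≤ cinf C := by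
    have hwnn : ∀ k, 0 ≤ ∑ i, ∑ j, Z k i j * (b j / s j) := fun k =>
      Finset.sum_nonneg fun i _ => Finset.sum_nonneg fun j _ =>
        (mul_pos (hZpos k i j) (hbs j)).le
    have h1 : ∑ k, gradLam η C (f (t+1)) (g (t+1)) (lam t) k ^ 2 ≤ cinf C ^ 2 := by
      calc ∑ k, gradLam η C (f (t+1)) (g (t+1)) (lam t) k ^ 2
          ≤ ∑ k, (cinf C * (∑ i, ∑ j, Z k i j * (b j / s j))) ^ 2 := by
            refine Finset.sum_le_sum fun k _ => ?_
            have h2 := habsgrad' k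
            nlinarith [abs_nonneg (gradLam η C (f (t+1)) (g (t+1)) (lam t) k),
              sq_abs (gradLam η C (f (t+1)) (g (t+1)) (lam t) k)]
        _ = cinf C ^ 2 * ∑ k, (∑ i, ∑ j, Z k i j * (b j / s j)) ^ 2 := by
            rw [Finset.mul_sum]
            exact Finset.sum_congr rfl fun k _ => by ring
        _ ≤ cinf C ^ 2 * (∑ k, ∑ i, ∑ j, Z k i j * (b j / s j)) ^ 2 := by
            refine mul_le_mul_of_nonneg_left ?_ (sq_nonneg _)
            exact Finset.sum_sq_le_sq_sum_of_nonneg fun k _ => hwnn k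
        _ = cinf C ^ 2 := by rw [hw1]; ring
    calc vnorm2 (gradLam η C (f (t+1)) (g (t+1)) (lam t))
        ≤ Real.sqrt (cinf C ^ 2) := Real.sqrt_le_sqrt h1
      _ = cinf C := Real.sqrt_sq hc0
  have hD2 : vnorm2 (fun k => lamv k - lam (t+1) k) ≤ Real.sqrt 2 := by
    have h1 : ∀ k, (lamv k - lam (t+1) k) ^ 2 ≤ lamv k + lam (t+1) k := by
      intro k
      have := hlamv.1 k
      have := (hlamMem (t+1)).1 k
      have := simplex_le_one hlamv k
      have := simplex_le_one (hlamMem (t+1)) k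
      nlinarith
    refine Real.sqrt_le_sqrt ?_
    calc ∑ k, (lamv k - lam (t+1) k) ^ 2 ≤ ∑ k, (lamv k + lam (t+1) k) :=
          Finset.sum_le_sum fun k _ => h1 k
      _ = 2 := by rw [Finset.sum_add_distrib, hlamv.2, (hlamMem (t+1)).2]; norm_num
  have hτpos : 0 < τ := by rw [hτ]; exact div_pos hη (pow_pos hc 2)
  have hvi := proj_vi (hlamstep t) hlamv
  have hdecomp : τ * (∑ k, (lamv k - lam t k) * gradLam η C (f (t+1)) (g (t+1)) (lam t) k)
      = (∑ k, (lamv k - lam (t+1) k)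
            * (lam t k + τ * gradLam η C (f (t+1)) (g (t+1)) (lam t) k - lam (t+1) k))
        + (∑ k, (lamv k - lam (t+1) k) * (lam (t+1) k - lam t k))
        + τ * (∑ k, (lam (t+1) k - lam t k) * gradLam η C (f (t+1)) (g (t+1)) (lam t) k) := by
    rw [Finset.mul_sum, Finset.mul_sum, ← Finset.sum_add_distrib, ← Finset.sum_add_distrib]
    exact Finset.sum_congr rfl fun k _ => by ring
  have hcs1 : ∑ k, (lamv k - lam (t+1) k) * (lam (t+1) k - lam t k) ≤ Real.sqrt 2 * D :=
    (cauchy_vn _ _).trans (mul_le_mul_of_nonneg_right hD2 hDnn)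
  have hcs2 : ∑ k, (lam (t+1) k - lam t k) * gradLam η C (f (t+1)) (g (t+1)) (lam t) k
      ≤ D * cinf C :=
    (cauchy_vn _ _).trans (mul_le_mul_of_nonneg_left hvn2grad' hDnn)
  have hA1 : τ * (∑ k, (lamv k - lam t k) * gradLam η C (f (t+1)) (g (t+1)) (lam t) k)
      ≤ Real.sqrt 2 * D + τ * (D * cinf C) := by
    rw [hdecomp]
    have h3 : τ * (∑ k, (lam (t+1) k - lam t k)
        * gradLam η C (f (t+1)) (g (t+1)) (lam t) k) ≤ τ * (D * cinf C) :=
      mul_le_mul_of_nonneg_left hcs2 hτpos.le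
    linarith
  have hpartA : ∑ k, (lamv k - lam t k) * gradLam η C (f (t+1)) (g (t+1)) (lam t) k
      ≤ 3 * cinf C ^ 2 * D / η := by
    have hXle : ∑ k, (lamv k - lam t k) * gradLam η C (f (t+1)) (g (t+1)) (lam t) k
        ≤ (Real.sqrt 2 * D + τ * (D * cinf C)) / τ := by
      rw [le_div_iff₀ hτpos]
      linarith
    refine hXle.trans ?_
    rw [hτ, div_le_div_iff₀ (div_pos hη (pow_pos hc 2)) hη]
    have e1 : η / cinf C ^ 2 * (D * cinf C) = η / cinf C * D := by
      field_simp
    have e2 : 3 * cinf C ^ 2 * D * (η / cinf C ^ 2) = 3 * D * η := by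
      field_simp
    rw [e1, e2]
    have e3 : η / cinf C ≤ 1 := (div_le_one hc).2 hηc
    have e4 : 0 ≤ η / cinf C := (div_pos hη hc).le
    have hsq2 : Real.sqrt 2 ≤ 2 := by
      nlinarith [Real.sq_sqrt (by norm_num : (0:ℝ) ≤ 2), Real.sqrt_nonneg 2]
    have h5a : Real.sqrt 2 * D ≤ 2 * D := mul_le_mul_of_nonneg_right hsq2 hDnn
    have h5b : η / cinf C * D ≤ 1 * D := mul_le_mul_of_nonneg_right e3 hDnn
    have h5 : Real.sqrt 2 * D + η / cinf C * D ≤ 3 * D := by linarith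
    exact mul_le_mul_of_nonneg_right h5 hη.le
  -- Part B : discrepancy between grad and grad'
  have habs1 : ∀ k, |lamv k - lam t k| ≤ 1 := by
    intro k
    rw [abs_le]
    constructor
    · have := hlamv.1 k; have := simplex_le_one (hlamMem t) k; linarith
    · have := simplex_le_one hlamv k; have := (hlamMem t).1 k; linarith
  have hgraddiff : ∀ k, gradLam η C (f (t+1)) (g t) (lam t) k
      - gradLam η C (f (t+1)) (g (t+1)) (lam t) k
      = ∑ i, ∑ j, Z k i j * (1 / S - b j / s j) * C k i j := by
    intro k
    rw [hgrad k, hgrad' k, ← Finset.sum_sub_distrib]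
    refine Finset.sum_congr rfl fun i _ => ?_
    rw [← Finset.sum_sub_distrib]
    exact Finset.sum_congr rfl fun j _ => by ring
  have hkey : ∀ k, (lamv k - lam t k) * (gradLam η C (f (t+1)) (g t) (lam t) k
      - gradLam η C (f (t+1)) (g (t+1)) (lam t) k)
      ≤ ∑ i, ∑ j, Z k i j * |1 / S - b j / s j| * cinf C := by
    intro k
    rw [hgraddiff k]
    have h1 : (lamv k - lam t k) * (∑ i, ∑ j, Z k i j * (1 / S - b j / s j) * C k i j)
        ≤ |∑ i, ∑ j, Z k i j * (1 / S - b j / s j) * C k i j| := by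
      have h0 := le_abs_self ((lamv k - lam t k)
        * (∑ i, ∑ j, Z k i j * (1 / S - b j / s j) * C k i j))
      rw [abs_mul] at h0
      have h2 : |lamv k - lam t k| * |∑ i, ∑ j, Z k i j * (1 / S - b j / s j) * C k i j|
          ≤ 1 * |∑ i, ∑ j, Z k i j * (1 / S - b j / s j) * C k i j| :=
        mul_le_mul_of_nonneg_right (habs1 k) (abs_nonneg _)
      rw [one_mul] at h2
      linarith
    refine h1.trans ?_
    calc |∑ i, ∑ j, Z k i j * (1 / S - b j / s j) * C k i j|
        ≤ ∑ i, ∑ j, |Z k i j * (1 / S - b j / s j) * C k i j| :=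
          (Finset.abs_sum_le_sum_abs _ _).trans
            (Finset.sum_le_sum fun i _ => Finset.abs_sum_le_sum_abs _ _)
      _ ≤ ∑ i, ∑ j, Z k i j * |1 / S - b j / s j| * cinf C := by
          refine Finset.sum_le_sum fun i _ => Finset.sum_le_sum fun j _ => ?_
          rw [abs_mul, abs_mul, abs_of_pos (hZpos k i j)]
          exact mul_le_mul_of_nonneg_left (hCle k i j)
            (mul_nonneg (hZpos k i j).le (abs_nonneg _))
  have hss : ∀ j, s j * |1 / S - b j / s j| = |s j / S - b j| := by
    intro j
    rw [show s j * |1 / S - b j / s j| = |s j| * |1 / S - b j / s j| from by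
        rw [abs_of_pos (hspos j)],
      ← abs_mul]
    congr 1
    rw [mul_sub, mul_one_div, mul_comm (s j) (b j / s j),
      div_mul_cancel₀ _ (ne_of_gt (hspos j))]
  have hvn1 : vnorm1 (fun j => ct t j - b j) = ∑ j, |s j / S - b j| := by
    simp only [vnorm1]
    exact Finset.sum_congr rfl fun j _ => by rw [hctj j]
  have hpartB : ∑ k, (lamv k - lam t k) * (gradLam η C (f (t+1)) (g t) (lam t) k
      - gradLam η C (f (t+1)) (g (t+1)) (lam t) k)
      ≤ cinf C * vnorm1 (fun j => ct t j - b j) := by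
    calc ∑ k, (lamv k - lam t k) * (gradLam η C (f (t+1)) (g t) (lam t) k
          - gradLam η C (f (t+1)) (g (t+1)) (lam t) k)
        ≤ ∑ k, ∑ i, ∑ j, Z k i j * |1 / S - b j / s j| * cinf C :=
          Finset.sum_le_sum fun k _ => hkey k
      _ = ∑ j, ∑ k, ∑ i, Z k i j * |1 / S - b j / s j| * cinf C := hswap _
      _ = ∑ j, s j * |1 / S - b j / s j| * cinf C := by
          refine Finset.sum_congr rfl fun j _ => ?_
          simp only [← Finset.sum_mul]
          rfl
      _ = cinf C * ∑ j, |s j / S - b j| := by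
          rw [Finset.mul_sum]
          exact Finset.sum_congr rfl fun j _ => by rw [hss j]; ring
      _ = cinf C * vnorm1 (fun j => ct t j - b j) := by rw [hvn1]
  have hsplit : ∑ k, (lamv k - lam t k) * gradLam η C (f (t+1)) (g t) (lam t) k
      = (∑ k, (lamv k - lam t k) * gradLam η C (f (t+1)) (g (t+1)) (lam t) k)
        + ∑ k, (lamv k - lam t k) * (gradLam η C (f (t+1)) (g t) (lam t) k
            - gradLam η C (f (t+1)) (g (t+1)) (lam t) k) := by
    rw [← Finset.sum_add_distrib]
    exact Finset.sum_congr rfl fun k _ => by ring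
  rw [hsplit]
  linarith


end EOT

end
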